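/- Let k ≥ 1, α ∈ (−(k+1)/2, −k/2), and let g : (0,∞)^k → ℝ be measurable with g(c x) = c^α g(x) for all c > 0, and A := ∫_{(0,∞)^k} |g(y) g(1+y)| dy < ∞. Then for every λ > 0 and t ≥ 0, ∫_{ℝ^k} h_t^λ(x)² dx ≤ A · t^{2α+k+2} / ((α + (k+1)/2)(2α + k + 2)). -/

import Mathlib

open MeasureTheory Real Set
open scoped ENNReal

/-- The kernel `h_t^λ` of the tempered generalized Hermite process. -/
noncomputable def tghKernel {k : ℕ} (g : (Fin k → ℝ) → ℝ) (lam t : ℝ)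
    (x : Fin k → ℝ) : ℝ :=
  ∫ s in Set.Ioc (0 : ℝ) t,
    Set.indicator {s' : ℝ | ∀ i, x i < s'}
      (fun s' => g (fun i => s' - x i) * Real.exp (-lam * ∑ i, (s' - x i))) s

namespace TGHaux

open Classical in
/-- auxiliary nonnegative kernel -/
noncomputable def Fk {k : ℕ} (g : (Fin k → ℝ) → ℝ) (s : ℝ) (x : Fin k → ℝ) : ℝ≥0∞ :=
  if ∀ i, x i < s then ENNReal.ofReal |g (fun i => s - x i)| else 0

variable {k : ℕ} {g : (Fin k → ℝ) → ℝ}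

lemma measF (hg : Measurable g) :
    Measurable (fun p : ℝ × (Fin k → ℝ) => Fk g p.1 p.2) := by
  unfold Fk
  have hset : MeasurableSet {p : ℝ × (Fin k → ℝ) | ∀ i, p.2 i < p.1} := by
    have : {p : ℝ × (Fin k → ℝ) | ∀ i, p.2 i < p.1} =
        ⋂ i, {p : ℝ × (Fin k → ℝ) | p.2 i < p.1} := by
      ext p; simp
    rw [this]
    exact MeasurableSet.iInter fun i =>
      measurableSet_lt (measurable_snd.eval) measurable_fst
  have hfun : Measurable (fun p : ℝ × (Fin k → ℝ) =>
      ENNReal.ofReal |g (fun i => p.1 - p.2 i)|) := by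
    apply ENNReal.measurable_ofReal.comp
    apply Measurable.abs
    exact hg.comp (measurable_pi_lambda _ fun i =>
      measurable_fst.sub ((measurable_pi_apply i).comp measurable_snd))
  exact Measurable.ite hset hfun measurable_const

lemma measF1 (hg : Measurable g) (s : ℝ) : Measurable (Fk g s) :=
  (measF hg).comp (measurable_const.prodMk measurable_id)

lemma measF2 (hg : Measurable g) (x : Fin k → ℝ) : Measurable (fun s => Fk g s x) :=
  (measF hg).comp (measurable_id.prodMk measurable_const)

lemma lemmaA (hg : Measurable g) {lam t : ℝ} (hlam : 0 < lam) (x : Fin k → ℝ) :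
    ENNReal.ofReal ((tghKernel g lam t x) ^ 2) ≤ (∫⁻ s in Set.Ioc 0 t, Fk g s x) ^ 2 := by
  classical
  set f : ℝ → ℝ := fun s => Set.indicator {s' : ℝ | ∀ i, x i < s'}
      (fun s' => g (fun i => s' - x i) * Real.exp (-lam * ∑ i, (s' - x i))) s with hf
  have hb : ∀ s, ENNReal.ofReal ‖f s‖ ≤ Fk g s x := by
    intro s
    by_cases hc : ∀ i, x i < s
    · show ENNReal.ofReal ‖Set.indicator {s' : ℝ | ∀ i, x i < s'}
          (fun s' => g (fun i => s' - x i) * Real.exp (-lam * ∑ i, (s' - x i))) s‖ ≤ _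
      rw [Set.indicator_of_mem (by exact hc : s ∈ {s' : ℝ | ∀ i, x i < s'})]
      unfold Fk
      rw [if_pos hc]
      apply ENNReal.ofReal_le_ofReal
      rw [Real.norm_eq_abs, abs_mul, abs_of_pos (Real.exp_pos _)]
      have hexp : Real.exp (-lam * ∑ i, (s - x i)) ≤ 1 := by
        rw [Real.exp_le_one_iff]
        have hsum : 0 ≤ ∑ i, (s - x i) :=
          Finset.sum_nonneg fun i _ => le_of_lt (sub_pos.mpr (hc i))
        nlinarith
      calc |g fun i => s - x i| * Real.exp (-lam * ∑ i, (s - x i))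
          ≤ |g fun i => s - x i| * 1 := by
            exact mul_le_mul_of_nonneg_left hexp (abs_nonneg _)
        _ = |g fun i => s - x i| := mul_one _
    · show ENNReal.ofReal ‖Set.indicator {s' : ℝ | ∀ i, x i < s'}
          (fun s' => g (fun i => s' - x i) * Real.exp (-lam * ∑ i, (s' - x i))) s‖ ≤ _
      rw [Set.indicator_of_notMem (by exact hc : s ∉ {s' : ℝ | ∀ i, x i < s'})]
      simp [Fk, hc]
  set K : ℝ≥0∞ := ∫⁻ s in Set.Ioc 0 t, Fk g s x with hK
  by_cases hKtop : K = ⊤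
  · rw [hKtop]; simp [pow_two]
  have hL : (∫⁻ s in Set.Ioc 0 t, ENNReal.ofReal ‖f s‖) ≤ K := lintegral_mono hb
  have habs : |tghKernel g lam t x| ≤ K.toReal := by
    calc |tghKernel g lam t x|
        ≤ (∫⁻ s in Set.Ioc 0 t, ENNReal.ofReal ‖f s‖).toReal := by
          rw [← Real.norm_eq_abs]
          exact norm_integral_le_lintegral_norm _
      _ ≤ K.toReal := ENNReal.toReal_mono hKtop hL
  calc ENNReal.ofReal ((tghKernel g lam t x) ^ 2)
      = ENNReal.ofReal (|tghKernel g lam t x| ^ 2) := by rw [sq_abs]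
    _ ≤ ENNReal.ofReal (K.toReal ^ 2) := by
        apply ENNReal.ofReal_le_ofReal
        exact pow_le_pow_left₀ (abs_nonneg _) habs 2
    _ = (ENNReal.ofReal K.toReal) ^ 2 := by rw [ENNReal.ofReal_pow ENNReal.toReal_nonneg]
    _ = K ^ 2 := by rw [ENNReal.ofReal_toReal hKtop]

lemma scale_lintegral (f : (Fin k → ℝ) → ℝ≥0∞) (hf : Measurable f) {δ : ℝ} (hδ : 0 < δ) :
    ∫⁻ z, f z = ENNReal.ofReal (δ ^ k) * ∫⁻ y, f (δ • y) := by
  have h2 : ∫⁻ y, f (δ • y) = ENNReal.ofReal ((δ ^ k)⁻¹) * ∫⁻ z, f z := by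
    rw [← lintegral_map hf (measurable_const_smul δ),
      Measure.map_addHaar_smul volume (ne_of_gt hδ), lintegral_smul_measure]
    congr
    rw [Module.finrank_fin_fun ℝ]
    rw [abs_of_pos (by positivity)]
  rw [h2, ← mul_assoc, ← ENNReal.ofReal_mul (by positivity),
    mul_inv_cancel₀ (by positivity), ENNReal.ofReal_one, one_mul]

lemma lemmaC (hg : Measurable g) (α : ℝ)
    (hhom : ∀ c : ℝ, 0 < c → ∀ x : Fin k → ℝ, (∀ i, 0 < x i) →
      g (c • x) = c ^ α * g x)
    {s s' : ℝ} (h : s < s') :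
    ∫⁻ x, Fk g s x * Fk g s' x =
      ENNReal.ofReal ((s' - s) ^ (2 * α + k)) *
        ∫⁻ y in {y : Fin k → ℝ | ∀ i, 0 < y i},
          ENNReal.ofReal |g y * g (fun i => 1 + y i)| := by
  classical
  set δ : ℝ := s' - s with hδdef
  have hδ : 0 < δ := sub_pos.mpr h
  set Φ : (Fin k → ℝ) → ℝ≥0∞ := fun z =>
    if ∀ i, 0 < z i then ENNReal.ofReal |g z * g (fun i => δ + z i)| else 0 with hΦdef
  have hSmeas : MeasurableSet {z : Fin k → ℝ | ∀ i, 0 < z i} := by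
    have : {z : Fin k → ℝ | ∀ i, 0 < z i} = ⋂ i, {z : Fin k → ℝ | 0 < z i} := by
      ext z; simp
    rw [this]
    exact MeasurableSet.iInter fun i => measurableSet_lt measurable_const (measurable_pi_apply i)
  have hΦmeas : Measurable Φ := by
    apply Measurable.ite hSmeas
    · apply ENNReal.measurable_ofReal.comp
      apply Measurable.abs
      exact hg.mul (hg.comp (measurable_pi_lambda _ fun i =>
        measurable_const.add (measurable_pi_apply i)))
    · exact measurable_const
  set c : Fin k → ℝ := (fun _ => s) with hcdef
  have hcx : ∀ x : Fin k → ℝ, c - x = fun i => s - x i := fun x => by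
    ext i; simp [hcdef]
  have hpt : ∀ x : Fin k → ℝ, Fk g s x * Fk g s' x = Φ (c - x) := by
    intro x
    rw [hcx x]
    simp only [hΦdef]
    by_cases hc : ∀ i, x i < s
    · have hc' : ∀ i, x i < s' := fun i => lt_trans (hc i) h
      have h0 : ∀ i, (0:ℝ) < s - x i := fun i => sub_pos.mpr (hc i)
      simp only [Fk, if_pos hc, if_pos hc', if_pos h0]
      rw [← ENNReal.ofReal_mul (abs_nonneg _), ← abs_mul]
      have earg : (fun i => δ + (s - x i)) = fun i => s' - x i := by
        ext i; rw [hδdef]; ring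
      rw [earg]
    · have h0 : ¬ ∀ i, (0:ℝ) < s - x i := fun hcon => hc fun i => sub_pos.mp (hcon i)
      simp only [Fk, if_neg hc, if_neg h0, zero_mul]
  have hT : MeasurePreserving (fun x : Fin k → ℝ => c - x)
      volume volume := Measure.measurePreserving_sub_left volume _
  have step2 : ∫⁻ x, Fk g s x * Fk g s' x = ∫⁻ z, Φ z := by
    rw [lintegral_congr hpt]
    exact hT.lintegral_comp hΦmeas
  have step4 : ∀ y : Fin k → ℝ, Φ (δ • y) = ENNReal.ofReal (δ ^ (2 * α)) *
      Set.indicator {y : Fin k → ℝ | ∀ i, 0 < y i}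
        (fun y => ENNReal.ofReal |g y * g (fun i => 1 + y i)|) y := by
    intro y
    by_cases hy : ∀ i, 0 < y i
    · have hy' : ∀ i, 0 < (δ • y) i := fun i => mul_pos hδ (hy i)
      have hy1 : ∀ i, (0:ℝ) < 1 + y i := fun i => by linarith [hy i]
      rw [hΦdef]
      simp only [if_pos hy']
      rw [Set.indicator_of_mem (by exact hy)]
      have e1 : (fun i => δ + (δ • y) i) = δ • (fun i => 1 + y i) := by
        ext i; simp [Pi.smul_apply, smul_eq_mul]; ring
      rw [e1, hhom δ hδ y hy, hhom δ hδ _ hy1]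
      have e2 : (δ ^ α * g y) * (δ ^ α * g (fun i => 1 + y i)) =
          δ ^ (2 * α) * (g y * g (fun i => 1 + y i)) := by
        rw [show (2:ℝ) * α = α + α by ring, Real.rpow_add hδ]; ring
      rw [e2, abs_mul, abs_of_pos (Real.rpow_pos_of_pos hδ _),
        ENNReal.ofReal_mul (Real.rpow_nonneg hδ.le _)]
    · have hy' : ¬ ∀ i, 0 < (δ • y) i := by
        intro hcon
        exact hy fun i => by
          have := hcon i
          simp only [Pi.smul_apply, smul_eq_mul] at this
          nlinarith
      rw [hΦdef]
      simp only [if_neg hy']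
      rw [Set.indicator_of_notMem (by exact hy), mul_zero]
  have step3 : ∫⁻ z, Φ z = ENNReal.ofReal (δ ^ k) * ∫⁻ y, Φ (δ • y) :=
    scale_lintegral Φ hΦmeas hδ
  rw [step2, step3, lintegral_congr step4,
    lintegral_const_mul' _ _ ENNReal.ofReal_ne_top,
    lintegral_indicator hSmeas _, ← mul_assoc,
    ← ENNReal.ofReal_mul (by positivity)]
  congr 2
  rw [← Real.rpow_natCast δ k, ← Real.rpow_add hδ]
  congr 1
  push_cast
  ring

lemma lemmaC' (hg : Measurable g) (α : ℝ)
    (hhom : ∀ c : ℝ, 0 < c → ∀ x : Fin k → ℝ, (∀ i, 0 < x i) →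
      g (c • x) = c ^ α * g x)
    {s s' : ℝ} (h : s ≠ s') :
    ∫⁻ x, Fk g s x * Fk g s' x =
      ENNReal.ofReal (|s' - s| ^ (2 * α + k)) *
        ∫⁻ y in {y : Fin k → ℝ | ∀ i, 0 < y i},
          ENNReal.ofReal |g y * g (fun i => 1 + y i)| := by
  rcases lt_or_gt_of_ne h with hlt | hgt
  · rw [abs_of_pos (by linarith)]; exact lemmaC hg α hhom hlt
  · rw [abs_of_neg (by linarith), neg_sub]
    rw [show (fun x => Fk g s x * Fk g s' x) = fun x => Fk g s' x * Fk g s x from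
      funext fun x => mul_comm _ _]
    exact lemmaC hg α hhom hgt

lemma lemmaB (hg : Measurable g) (t : ℝ) :
    ∫⁻ x, (∫⁻ s in Set.Ioc 0 t, Fk g s x) ^ 2 =
      ∫⁻ s in Set.Ioc 0 t, ∫⁻ s' in Set.Ioc 0 t, ∫⁻ x, Fk g s x * Fk g s' x := by
  have hF := measF hg
  have h1 : ∀ x : Fin k → ℝ, (∫⁻ s in Set.Ioc 0 t, Fk g s x) ^ 2
      = ∫⁻ s in Set.Ioc 0 t, ∫⁻ s' in Set.Ioc 0 t, Fk g s x * Fk g s' x := by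
    intro x
    rw [pow_two, ← lintegral_mul_const _ (measF2 hg x)]
    exact lintegral_congr fun s => (lintegral_const_mul _ (measF2 hg x)).symm
  rw [lintegral_congr h1]
  have hm1 : Measurable (fun q : ((Fin k → ℝ) × ℝ) × ℝ =>
      Fk g q.1.2 q.1.1 * Fk g q.2 q.1.1) := by
    apply Measurable.mul
    · exact hF.comp ((measurable_snd.comp measurable_fst).prodMk
        (measurable_fst.comp measurable_fst))
    · exact hF.comp (measurable_snd.prodMk (measurable_fst.comp measurable_fst))
  have hswap1 : AEMeasurable (Function.uncurry fun (x : Fin k → ℝ) (s : ℝ) =>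
      ∫⁻ s' in Set.Ioc 0 t, Fk g s x * Fk g s' x)
      ((volume : Measure (Fin k → ℝ)).prod (volume.restrict (Set.Ioc 0 t))) := by
    apply Measurable.aemeasurable
    exact Measurable.lintegral_prod_right' hm1
  rw [lintegral_lintegral_swap hswap1]
  refine lintegral_congr fun s => ?_
  have hm2 : Measurable (fun q : (Fin k → ℝ) × ℝ => Fk g s q.1 * Fk g q.2 q.1) := by
    apply Measurable.mul
    · exact (measF1 hg s).comp measurable_fst
    · exact hF.comp (measurable_snd.prodMk measurable_fst)
  exact lintegral_lintegral_swap hm2.aemeasurable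

lemma lemmaE {p t : ℝ} (hp1 : -1 < p) (hp0 : p < 0) (ht : 0 ≤ t) :
    ∫⁻ s in Set.Ioc 0 t, ∫⁻ s' in Set.Ioc 0 t, ENNReal.ofReal (|s' - s| ^ p) =
      ENNReal.ofReal (2 * t ^ (p + 2) / ((p + 1) * (p + 2))) := by
  have hq : 0 < p + 1 := by linarith
  have inner : ∀ s ∈ Set.Ioc (0:ℝ) t,
      ∫⁻ s' in Set.Ioc 0 t, ENNReal.ofReal (|s' - s| ^ p) =
        ENNReal.ofReal ((s ^ (p+1) + (t - s) ^ (p+1)) / (p+1)) := by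
    rintro s ⟨h0s, hst⟩
    have i1' : IntervalIntegrable (fun s' : ℝ => (s - s') ^ p) volume 0 s := by
      have := ((intervalIntegral.intervalIntegrable_rpow' (a := 0) (b := s) hp1).comp_sub_left s).symm
      simpa using this
    have i2' : IntervalIntegrable (fun s' : ℝ => (s' - s) ^ p) volume s t := by
      have := (intervalIntegral.intervalIntegrable_rpow' (a := 0) (b := t - s) hp1).comp_sub_right s
      simpa using this
    have heq1 : Set.EqOn (fun s' : ℝ => |s' - s| ^ p) (fun s' : ℝ => (s - s') ^ p)
        (Set.Ioc 0 s) := by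
      intro s' hs'
      simp only
      rw [abs_sub_comm, abs_of_nonneg (by linarith [hs'.2] : (0:ℝ) ≤ s - s')]
    have heq2 : Set.EqOn (fun s' : ℝ => |s' - s| ^ p) (fun s' : ℝ => (s' - s) ^ p)
        (Set.Ioc s t) := by
      intro s' hs'
      simp only
      rw [abs_of_nonneg (by linarith [hs'.1] : (0:ℝ) ≤ s' - s)]
    have hIoc1 : IntegrableOn (fun s' : ℝ => |s' - s| ^ p) (Set.Ioc 0 s) := by
      apply IntegrableOn.congr_fun _ heq1.symm measurableSet_Ioc
      exact (intervalIntegrable_iff_integrableOn_Ioc_of_le h0s.le).mp i1'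
    have hIoc2 : IntegrableOn (fun s' : ℝ => |s' - s| ^ p) (Set.Ioc s t) := by
      apply IntegrableOn.congr_fun _ heq2.symm measurableSet_Ioc
      exact (intervalIntegrable_iff_integrableOn_Ioc_of_le hst).mp i2'
    have hInt : IntegrableOn (fun s' : ℝ => |s' - s| ^ p) (Set.Ioc 0 t) := by
      rw [← Set.Ioc_union_Ioc_eq_Ioc h0s.le hst]
      exact hIoc1.union hIoc2
    rw [← ofReal_integral_eq_lintegral_ofReal hInt
      (Filter.Eventually.of_forall fun s' => Real.rpow_nonneg (abs_nonneg _) _)]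
    congr 1
    rw [← Set.Ioc_union_Ioc_eq_Ioc h0s.le hst,
      setIntegral_union (Set.Ioc_disjoint_Ioc_of_le le_rfl) measurableSet_Ioc hIoc1 hIoc2]
    have hpiece1 : ∫ s' in Set.Ioc 0 s, |s' - s| ^ p = s ^ (p+1) / (p+1) := by
      rw [setIntegral_congr_fun measurableSet_Ioc heq1,
        ← intervalIntegral.integral_of_le h0s.le,
        intervalIntegral.integral_comp_sub_left (fun u : ℝ => u ^ p) s]
      simp only [sub_self, sub_zero]
      rw [integral_rpow (Or.inl hp1), Real.zero_rpow (by linarith), sub_zero]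
    have hpiece2 : ∫ s' in Set.Ioc s t, |s' - s| ^ p = (t - s) ^ (p+1) / (p+1) := by
      rw [setIntegral_congr_fun measurableSet_Ioc heq2,
        ← intervalIntegral.integral_of_le hst,
        intervalIntegral.integral_comp_sub_right (fun u : ℝ => u ^ p) s]
      simp only [sub_self]
      rw [integral_rpow (Or.inl hp1), Real.zero_rpow (by linarith), sub_zero]
    rw [hpiece1, hpiece2, ← add_div]
  rw [setLIntegral_congr_fun measurableSet_Ioc inner]
  have hc1 : Continuous fun s : ℝ => s ^ (p+1) := by
    rw [continuous_iff_continuousAt]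
    intro x
    exact Real.continuousAt_rpow_const x (p+1) (Or.inr hq.le)
  have hc : Continuous fun s : ℝ => (s ^ (p+1) + (t - s) ^ (p+1)) / (p+1) :=
    ((hc1.add (hc1.comp (continuous_const.sub continuous_id))).div_const _)
  have hIo : IntegrableOn (fun s : ℝ => (s ^ (p+1) + (t - s) ^ (p+1)) / (p+1))
      (Set.Ioc 0 t) := hc.integrableOn_Ioc
  have hnn : 0 ≤ᵐ[volume.restrict (Set.Ioc 0 t)]
      fun s : ℝ => (s ^ (p+1) + (t - s) ^ (p+1)) / (p+1) := by
    rw [Filter.EventuallyLE, ae_restrict_iff' measurableSet_Ioc]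
    apply Filter.Eventually.of_forall
    rintro s ⟨h0s, hst⟩
    simp only [Pi.zero_apply]
    apply div_nonneg _ hq.le
    exact add_nonneg (Real.rpow_nonneg h0s.le _) (Real.rpow_nonneg (by linarith) _)
  rw [← ofReal_integral_eq_lintegral_ofReal hIo hnn]
  congr 1
  have i3 : IntervalIntegrable (fun u : ℝ => u ^ (p+1)) volume 0 t :=
    intervalIntegral.intervalIntegrable_rpow' (by linarith)
  have i4 : IntervalIntegrable (fun s : ℝ => (t - s) ^ (p+1)) volume 0 t := by
    have := (i3.comp_sub_left t).symm
    simpa using this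
  rw [← intervalIntegral.integral_of_le ht, intervalIntegral.integral_div,
    intervalIntegral.integral_add i3 i4,
    intervalIntegral.integral_comp_sub_left (fun u : ℝ => u ^ (p+1)) t]
  simp only [sub_self, sub_zero]
  rw [integral_rpow (Or.inl (by linarith : (-1:ℝ) < p + 1)),
    Real.zero_rpow (by linarith), sub_zero]
  have : p + 1 + 1 = p + 2 := by ring
  rw [this]
  field_simp
  ring

end TGHaux

theorem stmt2 {k : ℕ} (hk : 1 ≤ k) (α : ℝ)
    (hα₁ : -((k : ℝ) + 1) / 2 < α) (hα₂ : α < -(k : ℝ) / 2)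
    (g : (Fin k → ℝ) → ℝ) (hg : Measurable g)
    (hhom : ∀ c : ℝ, 0 < c → ∀ x : Fin k → ℝ, (∀ i, 0 < x i) →
      g (c • x) = c ^ α * g x)
    (hint : IntegrableOn (fun y : Fin k → ℝ => |g y * g (fun i => 1 + y i)|)
      {y : Fin k → ℝ | ∀ i, 0 < y i})
    (lam : ℝ) (hlam : 0 < lam) (t : ℝ) (ht : 0 ≤ t) :
    (∫ x : Fin k → ℝ, (tghKernel g lam t x) ^ 2) ≤
      (∫ y in {y : Fin k → ℝ | ∀ i, 0 < y i}, |g y * g (fun i => 1 + y i)|) *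
        t ^ (2 * α + (k : ℝ) + 2) /
          ((α + ((k : ℝ) + 1) / 2) * (2 * α + (k : ℝ) + 2)) := by
  classical
  set S : Set (Fin k → ℝ) := {y : Fin k → ℝ | ∀ i, 0 < y i} with hS
  set A : ℝ := ∫ y in S, |g y * g (fun i => 1 + y i)| with hA
  have hk1 : (1 : ℝ) ≤ (k : ℝ) := by exact_mod_cast hk
  set p : ℝ := 2 * α + k with hp
  have hp1 : -1 < p := by simp only [hp]; linarith
  have hp0 : p < 0 := by simp only [hp]; linarith
  have hd1 : 0 < α + ((k : ℝ) + 1) / 2 := by linarith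
  have hd2 : 0 < 2 * α + (k : ℝ) + 2 := by linarith
  have hA0 : 0 ≤ A := by
    apply integral_nonneg; intro y; exact abs_nonneg _
  have hRHS0 : 0 ≤ A * t ^ (2 * α + (k : ℝ) + 2) /
      ((α + ((k : ℝ) + 1) / 2) * (2 * α + (k : ℝ) + 2)) := by
    apply div_nonneg (mul_nonneg hA0 (Real.rpow_nonneg ht _)) (le_of_lt (mul_pos hd1 hd2))
  by_cases hm : AEStronglyMeasurable (fun x : Fin k → ℝ => (tghKernel g lam t x) ^ 2)
      (volume : Measure (Fin k → ℝ))
  swap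
  · rw [integral_non_aestronglyMeasurable hm]; exact hRHS0
  have hnn : 0 ≤ᵐ[volume] fun x : Fin k → ℝ => (tghKernel g lam t x) ^ 2 :=
    Filter.Eventually.of_forall fun x => sq_nonneg _
  rw [integral_eq_lintegral_of_nonneg_ae hnn hm]
  -- lintegral chain
  have hAbar : (∫⁻ y in S, ENNReal.ofReal |g y * g (fun i => 1 + y i)|) = ENNReal.ofReal A := by
    rw [hA, ofReal_integral_eq_lintegral_ofReal hint
      (Filter.Eventually.of_forall fun y => abs_nonneg _)]
  have key : (∫⁻ x, ENNReal.ofReal ((tghKernel g lam t x) ^ 2)) ≤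
      ENNReal.ofReal (A * t ^ (2 * α + (k : ℝ) + 2) /
        ((α + ((k : ℝ) + 1) / 2) * (2 * α + (k : ℝ) + 2))) := by
    calc (∫⁻ x, ENNReal.ofReal ((tghKernel g lam t x) ^ 2))
        ≤ ∫⁻ x, (∫⁻ s in Set.Ioc 0 t, TGHaux.Fk g s x) ^ 2 :=
          lintegral_mono fun x => TGHaux.lemmaA hg hlam x
      _ = ∫⁻ s in Set.Ioc 0 t, ∫⁻ s' in Set.Ioc 0 t, ∫⁻ x, TGHaux.Fk g s x * TGHaux.Fk g s' x :=
          TGHaux.lemmaB hg t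
      _ = ∫⁻ s in Set.Ioc 0 t, ∫⁻ s' in Set.Ioc 0 t,
            ENNReal.ofReal (|s' - s| ^ p) * ENNReal.ofReal A := by
          refine lintegral_congr fun s => lintegral_congr_ae ?_
          have hs : (volume.restrict (Set.Ioc (0:ℝ) t)) {s} = 0 := by
            rw [Measure.restrict_apply (measurableSet_singleton s)]
            exact measure_mono_null (Set.inter_subset_left) (measure_singleton s)
          filter_upwards [measure_eq_zero_iff_ae_notMem.mp hs] with s' hs'
          have hne : s ≠ s' := fun h => hs' (h ▸ rfl)
          rw [TGHaux.lemmaC' hg α hhom hne, hAbar]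
      _ = (∫⁻ s in Set.Ioc 0 t, ∫⁻ s' in Set.Ioc 0 t,
            ENNReal.ofReal (|s' - s| ^ p)) * ENNReal.ofReal A := by
          rw [← lintegral_mul_const' _ _ ENNReal.ofReal_ne_top]
          exact lintegral_congr fun s => lintegral_mul_const' _ _ ENNReal.ofReal_ne_top
      _ = ENNReal.ofReal (2 * t ^ (p + 2) / ((p + 1) * (p + 2))) * ENNReal.ofReal A := by
          rw [TGHaux.lemmaE hp1 hp0 ht]
      _ = ENNReal.ofReal (A * t ^ (2 * α + (k : ℝ) + 2) /
            ((α + ((k : ℝ) + 1) / 2) * (2 * α + (k : ℝ) + 2))) := by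
          have hnn2 : 0 ≤ 2 * t ^ (p + 2) / ((p + 1) * (p + 2)) :=
            div_nonneg (by positivity) (le_of_lt (mul_pos (by linarith) (by linarith)))
          rw [← ENNReal.ofReal_mul hnn2]
          congr 1
          have h2 : p + 2 = 2 * α + (k : ℝ) + 2 := by rw [hp]
          rw [h2]
          field_simp
          rw [hp]
          ring
  calc (∫⁻ x, ENNReal.ofReal ((tghKernel g lam t x) ^ 2)).toReal
      ≤ (ENNReal.ofReal (A * t ^ (2 * α + (k : ℝ) + 2) /
          ((α + ((k : ℝ) + 1) / 2) * (2 * α + (k : ℝ) + 2)))).toReal :=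
        ENNReal.toReal_mono ENNReal.ofReal_ne_top key
    _ = A * t ^ (2 * α + (k : ℝ) + 2) /
          ((α + ((k : ℝ) + 1) / 2) * (2 * α + (k : ℝ) + 2)) :=
        ENNReal.toReal_ofReal hRHS0
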